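/- arXiv:1707.06034 — 2 statements merged into one kernel-verified Lean document; each statement's English description precedes it below -/
import Mathlib

section
/- Convergence of Carathéodory compositions in Lebesgue spaces (Lemma A.1). Let Ω be a bounded (Lebesgue measurable) subset of ℝ^N, N ∈ ℕ, and for each n ∈ ℕ let H_n : Ω × ℝ^N → ℝ be a Carathéodory function such that: (a) there exist constants C > 0 and γ > 0 with |H_n(x,ξ)| ≤ C(1 + |ξ|^γ) for a.e. x ∈ Ω, all ξ ∈ ℝ^N and all n ∈ ℕ; and (b) there is a Carathéodory function H : Ω × ℝ^N → ℝ such that for a.e. x ∈ Ω, H_n(x,·) → H(x,·) uniformly on compact subsets of ℝ^N as n → ∞. If p ∈ [max(1,γ), ∞) and (u_n)_{n∈ℕ} is a sequence of ℝ^N-valued functions with u_n → u in L^p(Ω)^N as n → ∞, then H_n(·, u_n(·)) → H(·, u(·)) in L^{p/γ}(Ω) as n → ∞. -/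
open MeasureTheory Filter Topology
open scoped ENNReal NNReal

noncomputable section

private lemma rpow_add2_le {a b q : ℝ} (ha : 0 ≤ a) (hb : 0 ≤ b) (hq : 0 ≤ q) :
    (a + b) ^ q ≤ 2 ^ q * (a ^ q + b ^ q) := by
  have haq : 0 ≤ a ^ q := Real.rpow_nonneg ha q
  have hbq : 0 ≤ b ^ q := Real.rpow_nonneg hb q
  have hm0 : 0 ≤ max a b := le_trans ha (le_max_left _ _)
  have h1 : a + b ≤ 2 * max a b := by
    have := le_max_left a b; have := le_max_right a b; linarith
  have h2 : (max a b) ^ q ≤ a ^ q + b ^ q := by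
    rcases max_choice a b with h | h <;> rw [h] <;> linarith
  calc (a + b) ^ q ≤ (2 * max a b) ^ q := Real.rpow_le_rpow (by linarith) h1 hq
    _ = 2 ^ q * (max a b) ^ q := Real.mul_rpow (by norm_num) hm0
    _ ≤ 2 ^ q * (a ^ q + b ^ q) :=
        mul_le_mul_of_nonneg_left h2 (Real.rpow_nonneg (by norm_num) q)

private lemma rpow_add3_le {a b c q : ℝ} (ha : 0 ≤ a) (hb : 0 ≤ b) (hc : 0 ≤ c) (hq : 0 ≤ q) :
    (a + b + c) ^ q ≤ 3 ^ q * (a ^ q + b ^ q + c ^ q) := by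
  have haq : 0 ≤ a ^ q := Real.rpow_nonneg ha q
  have hbq : 0 ≤ b ^ q := Real.rpow_nonneg hb q
  have hcq : 0 ≤ c ^ q := Real.rpow_nonneg hc q
  set m := max a (max b c) with hm
  have hm0 : 0 ≤ m := le_trans ha (le_max_left _ _)
  have h1 : a + b + c ≤ 3 * m := by
    have h1 := le_max_left a (max b c)
    have h2 := (le_max_left b c).trans (le_max_right a (max b c))
    have h3 := (le_max_right b c).trans (le_max_right a (max b c))
    rw [← hm] at h1 h2 h3
    linarith
  have h2 : m ^ q ≤ a ^ q + b ^ q + c ^ q := by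
    rcases max_choice a (max b c) with h | h
    · rw [hm, h]; linarith
    · rcases max_choice b c with h' | h' <;> rw [hm, h, h'] <;> linarith
  calc (a + b + c) ^ q ≤ (3 * m) ^ q := Real.rpow_le_rpow (by linarith) h1 hq
    _ = 3 ^ q * m ^ q := Real.mul_rpow (by norm_num) hm0
    _ ≤ 3 ^ q * (a ^ q + b ^ q + c ^ q) :=
        mul_le_mul_of_nonneg_left h2 (Real.rpow_nonneg (by norm_num) q)

/-- **Convergence of Carathéodory compositions in Lebesgue spaces** (Lemma A.1).
If `Hₙ` are Carathéodory functions on `Ω × ℝ^N` with a uniform growth bound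
`|Hₙ(x,ξ)| ≤ C(1 + |ξ|^γ)`, converging for a.e. `x` to a Carathéodory function `H`
uniformly on compact subsets of `ℝ^N`, and if `uₙ → u` in `L^p(Ω)^N` with
`p ∈ [max(1,γ), ∞)`, then `Hₙ(·, uₙ) → H(·, u)` in `L^{p/γ}(Ω)`. -/
theorem caratheodory_composition_convergence
    (N : ℕ) (hN : 0 < N)
    (Ω : Set (EuclideanSpace ℝ (Fin N)))
    (hΩmeas : MeasurableSet Ω) (hΩbdd : Bornology.IsBounded Ω)
    (Hn : ℕ → EuclideanSpace ℝ (Fin N) → EuclideanSpace ℝ (Fin N) → ℝ)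
    (H : EuclideanSpace ℝ (Fin N) → EuclideanSpace ℝ (Fin N) → ℝ)
    -- the `Hₙ` and `H` are Carathéodory functions
    (hHnmeas : ∀ (n : ℕ) (ξ : EuclideanSpace ℝ (Fin N)), Measurable fun x => Hn n x ξ)
    (hHncont : ∀ n : ℕ, ∀ᵐ x ∂(volume.restrict Ω), Continuous fun ξ => Hn n x ξ)
    (hHmeas : ∀ ξ : EuclideanSpace ℝ (Fin N), Measurable fun x => H x ξ)
    (hHcont : ∀ᵐ x ∂(volume.restrict Ω), Continuous fun ξ => H x ξ)
    -- (a) uniform growth bound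
    (C γ : ℝ) (hC : 0 < C) (hγ : 0 < γ)
    (hgrowth : ∀ n : ℕ, ∀ᵐ x ∂(volume.restrict Ω),
      ∀ ξ : EuclideanSpace ℝ (Fin N), |Hn n x ξ| ≤ C * (1 + ‖ξ‖ ^ γ))
    -- (b) a.e. uniform convergence on compact sets
    (hunif : ∀ᵐ x ∂(volume.restrict Ω), ∀ K : Set (EuclideanSpace ℝ (Fin N)),
      IsCompact K → TendstoUniformlyOn (fun n ξ => Hn n x ξ) (H x) atTop K)
    -- `uₙ → u` in `L^p(Ω)^N`
    (p : ℝ) (hp : max 1 γ ≤ p)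
    (u : ℕ → EuclideanSpace ℝ (Fin N) → EuclideanSpace ℝ (Fin N))
    (ulim : EuclideanSpace ℝ (Fin N) → EuclideanSpace ℝ (Fin N))
    (humeas : ∀ n, AEMeasurable (u n) (volume.restrict Ω))
    (hulimmeas : AEMeasurable ulim (volume.restrict Ω))
    (huLp : ∀ n, Integrable (fun x => ‖u n x‖ ^ p) (volume.restrict Ω))
    (hulimLp : Integrable (fun x => ‖ulim x‖ ^ p) (volume.restrict Ω))
    (hconv : Tendsto (fun n => ∫ x in Ω, ‖u n x - ulim x‖ ^ p) atTop (𝓝 0)) :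
    -- conclusion: `Hₙ(·, uₙ) → H(·, u)` in `L^{p/γ}(Ω)`
    Tendsto (fun n => ∫ x in Ω, |Hn n x (u n x) - H x (ulim x)| ^ (p / γ)) atTop (𝓝 0) := by
  classical
  set μ := volume.restrict Ω with hμdef
  haveI hμfin : IsFiniteMeasure μ := by
    constructor
    rw [hμdef, Measure.restrict_apply_univ]
    exact hΩbdd.measure_lt_top
  have hp1 : (1 : ℝ) ≤ p := le_trans (le_max_left _ _) hp
  have hγp : γ ≤ p := le_trans (le_max_right _ _) hp
  have hp0 : (0 : ℝ) < p := lt_of_lt_of_le one_pos hp1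
  set q := p / γ with hqdef
  have hq1 : (1 : ℝ) ≤ q := (one_le_div hγ).2 hγp
  have hq0 : (0 : ℝ) < q := lt_of_lt_of_le one_pos hq1
  have hγq : γ * q = p := by rw [hqdef]; field_simp
  -- Carathéodory composition: a.e.-measurability of `x ↦ G x (w x)`
  have hcomp : ∀ G : EuclideanSpace ℝ (Fin N) → EuclideanSpace ℝ (Fin N) → ℝ,
      (∀ ξ, Measurable fun x => G x ξ) →
      (∀ᵐ x ∂μ, Continuous fun ξ => G x ξ) →
      ∀ w : EuclideanSpace ℝ (Fin N) → EuclideanSpace ℝ (Fin N), AEMeasurable w μ →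
      AEMeasurable (fun x => G x (w x)) μ := by
    intro G hGm hGc w hw
    set S := {x | ¬ Continuous fun ξ => G x ξ} with hS
    have hS0 : μ S = 0 := MeasureTheory.ae_iff.mp hGc
    set T := (toMeasurable μ S)ᶜ with hT
    have hTm : MeasurableSet T := (measurableSet_toMeasurable μ S).compl
    have hTc : μ Tᶜ = 0 := by rw [hT, compl_compl, measure_toMeasurable]; exact hS0
    have hTcont : ∀ x ∈ T, Continuous fun ξ => G x ξ := by
      intro x hx
      by_contra h
      exact hx (subset_toMeasurable μ S h)
    set G' : EuclideanSpace ℝ (Fin N) → EuclideanSpace ℝ (Fin N) → ℝ :=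
      fun x ξ => if x ∈ T then G x ξ else 0 with hG'
    have hjoint : Measurable (Function.uncurry fun ξ x => G' x ξ) := by
      apply measurable_uncurry_of_continuous_of_measurable
      · intro x
        by_cases hx : x ∈ T
        · simpa [hG', hx] using hTcont x hx
        · simpa [hG', hx] using continuous_const
      · intro ξ
        exact Measurable.ite hTm (hGm ξ) measurable_const
    have hmeas' : AEMeasurable (fun x => G' x (w x)) μ :=
      hjoint.comp_aemeasurable (hw.prodMk aemeasurable_id)
    refine hmeas'.congr ?_
    have hTa : ∀ᵐ x ∂μ, x ∈ T := by
      rw [MeasureTheory.ae_iff]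
      exact hTc
    filter_upwards [hTa] with x hx
    simp [hG', hx]
  have hFn : ∀ n, AEMeasurable (fun x => Hn n x (u n x)) μ := fun n =>
    hcomp (Hn n) (hHnmeas n) (hHncont n) (u n) (humeas n)
  have hFlim : AEMeasurable (fun x => H x (ulim x)) μ :=
    hcomp H hHmeas hHcont ulim hulimmeas
  -- measurability and integrability of `‖uₙ - u‖ᵖ`
  have hdm : ∀ n, AEMeasurable (fun x => ‖u n x - ulim x‖ ^ p) μ := fun n =>
    (Real.continuous_rpow_const hp0.le).measurable.comp_aemeasurable ((humeas n).sub hulimmeas).norm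
  have hdi : ∀ n, Integrable (fun x => ‖u n x - ulim x‖ ^ p) μ := by
    intro n
    refine Integrable.mono' (((huLp n).add hulimLp).const_mul (2 ^ p))
      (hdm n).aestronglyMeasurable (Eventually.of_forall fun x => ?_)
    rw [Real.norm_eq_abs, abs_of_nonneg (Real.rpow_nonneg (norm_nonneg _) _)]
    calc ‖u n x - ulim x‖ ^ p ≤ (‖u n x‖ + ‖ulim x‖) ^ p :=
          Real.rpow_le_rpow (norm_nonneg _) (norm_sub_le _ _) hp0.le
      _ ≤ 2 ^ p * (‖u n x‖ ^ p + ‖ulim x‖ ^ p) :=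
          rpow_add2_le (norm_nonneg _) (norm_nonneg _) hp0.le
  -- growth bound for the limit function `H`
  have hHg : ∀ᵐ x ∂μ, ∀ ξ, |H x ξ| ≤ C * (1 + ‖ξ‖ ^ γ) := by
    filter_upwards [ae_all_iff.2 hgrowth, hunif] with x hg hu ξ
    have ht : Tendsto (fun n => Hn n x ξ) atTop (𝓝 (H x ξ)) :=
      (hu {ξ} isCompact_singleton).tendsto_at rfl
    exact le_of_tendsto ht.abs (Eventually.of_forall fun n => hg n ξ)
  -- main argument via subsequences
  apply Filter.tendsto_of_subseq_tendsto
  intro ns hns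
  have ha : Tendsto (fun k => ∫ x in Ω, ‖u (ns k) x - ulim x‖ ^ p) atTop (𝓝 0) :=
    hconv.comp hns
  have hev : ∀ m : ℕ, ∀ᶠ k in atTop,
      ∫ x in Ω, ‖u (ns k) x - ulim x‖ ^ p ≤ (1 / 2 : ℝ) ^ m := by
    intro m
    exact (ha.eventually (gt_mem_nhds (by positivity : (0:ℝ) < (1/2:ℝ) ^ m))).mono
      fun k hk => hk.le
  obtain ⟨φ, hφmono, hφle⟩ := Filter.extraction_forall_of_eventually hev
  set ψ := fun k => ns (φ k) with hψdef
  have hψ : Tendsto ψ atTop atTop := hns.comp hφmono.tendsto_atTop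
  refine ⟨φ, ?_⟩
  -- the series controlling the subsequence
  set W : EuclideanSpace ℝ (Fin N) → ℝ≥0∞ :=
    fun x => ∑' k, ENNReal.ofReal (‖u (ψ k) x - ulim x‖ ^ p) with hWdef
  have hWmeas : AEMeasurable W μ :=
    AEMeasurable.ennreal_tsum fun k => (hdm (ψ k)).ennreal_ofReal
  have hWlint : ∫⁻ x, W x ∂μ < ⊤ := by
    have h1 : ∫⁻ x, W x ∂μ
        = ∑' k, ∫⁻ x, ENNReal.ofReal (‖u (ψ k) x - ulim x‖ ^ p) ∂μ := by
      rw [hWdef]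
      exact lintegral_tsum fun k => (hdm (ψ k)).ennreal_ofReal
    rw [h1]
    calc ∑' k, ∫⁻ x, ENNReal.ofReal (‖u (ψ k) x - ulim x‖ ^ p) ∂μ
        ≤ ∑' k, ENNReal.ofReal ((1 / 2 : ℝ) ^ k) := by
          refine ENNReal.tsum_le_tsum fun k => ?_
          rw [← ofReal_integral_eq_lintegral_ofReal (hdi (ψ k))
            (Eventually.of_forall fun x => Real.rpow_nonneg (norm_nonneg _) _)]
          exact ENNReal.ofReal_le_ofReal (hφle k)
      _ = ∑' k, (ENNReal.ofReal (1 / 2)) ^ k :=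
          tsum_congr fun k => ENNReal.ofReal_pow (by norm_num) k
      _ = (1 - ENNReal.ofReal (1 / 2))⁻¹ := ENNReal.tsum_geometric _
      _ < ⊤ := by
          rw [ENNReal.inv_lt_top]
          exact tsub_pos_of_lt (ENNReal.ofReal_lt_one.2 (by norm_num))
  have hWae : ∀ᵐ x ∂μ, W x < ⊤ := ae_lt_top' hWmeas hWlint.ne
  -- a.e. convergence of the subsequence
  have hvconv : ∀ᵐ x ∂μ, Tendsto (fun k => u (ψ k) x) atTop (𝓝 (ulim x)) := by
    filter_upwards [hWae] with x hx
    have hsum : Summable fun k => ‖u (ψ k) x - ulim x‖ ^ p := by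
      have h1 : (∑' k, ((‖u (ψ k) x - ulim x‖ ^ p).toNNReal : ℝ≥0∞)) ≠ ⊤ := by
        simpa [hWdef, ENNReal.ofReal] using hx.ne
      have h2 := ENNReal.tsum_coe_ne_top_iff_summable.1 h1
      have h3 := NNReal.summable_coe.2 h2
      exact h3.congr fun k => Real.coe_toNNReal _ (Real.rpow_nonneg (norm_nonneg _) _)
    have h0 : Tendsto (fun k => ‖u (ψ k) x - ulim x‖ ^ p) atTop (𝓝 0) :=
      hsum.tendsto_atTop_zero
    have h0' : Tendsto (fun k => ‖u (ψ k) x - ulim x‖) atTop (𝓝 0) := by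
      have hc : Tendsto (fun k => (‖u (ψ k) x - ulim x‖ ^ p) ^ (1 / p)) atTop
          (𝓝 ((0 : ℝ) ^ (1 / p))) := h0.rpow_const (Or.inr (by positivity))
      rw [Real.zero_rpow (by positivity : (1:ℝ)/p ≠ 0)] at hc
      refine hc.congr fun k => ?_
      rw [← Real.rpow_mul (norm_nonneg _), mul_one_div, div_self hp0.ne', Real.rpow_one]
    rwa [tendsto_iff_norm_sub_tendsto_zero]
  -- uniform domination of the subsequence
  have hDb : ∀ᵐ x ∂μ, ∀ k, ‖u (ψ k) x - ulim x‖ ^ p ≤ (W x).toReal := by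
    filter_upwards [hWae] with x hx k
    have h1 : ENNReal.ofReal (‖u (ψ k) x - ulim x‖ ^ p) ≤ W x := ENNReal.le_tsum k
    have h2 := ENNReal.toReal_mono hx.ne h1
    rwa [ENNReal.toReal_ofReal (Real.rpow_nonneg (norm_nonneg _) _)] at h2
  -- dominating function
  set bnd : EuclideanSpace ℝ (Fin N) → ℝ := fun x =>
    3 ^ q * ((2 * C) ^ q + C ^ q * (2 ^ p * (‖ulim x‖ ^ p + (W x).toReal))
      + C ^ q * ‖ulim x‖ ^ p) with hbnd
  have hWint : Integrable (fun x => (W x).toReal) μ :=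
    integrable_toReal_of_lintegral_ne_top hWmeas hWlint.ne
  have hbndInt : Integrable bnd μ := by
    have h1 : Integrable (fun x => ‖ulim x‖ ^ p + (W x).toReal) μ := hulimLp.add hWint
    have h2 := (h1.const_mul (2 ^ p)).const_mul (C ^ q)
    have h3 := hulimLp.const_mul (C ^ q)
    have h4 : Integrable (fun _ : EuclideanSpace ℝ (Fin N) => (2 * C) ^ q) μ :=
      integrable_const _
    exact ((h4.add h2).add h3).const_mul (3 ^ q)
  -- measurability of the integrands
  have hFmeas : ∀ k, AEStronglyMeasurable
      (fun x => |Hn (ψ k) x (u (ψ k) x) - H x (ulim x)| ^ q) μ := by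
    intro k
    have h1 : AEMeasurable (fun x => Hn (ψ k) x (u (ψ k) x) - H x (ulim x)) μ :=
      (hFn (ψ k)).sub hFlim
    exact ((Real.continuous_rpow_const hq0.le).measurable.comp_aemeasurable
      (continuous_abs.measurable.comp_aemeasurable h1)).aestronglyMeasurable
  -- domination
  have h_bound : ∀ k, ∀ᵐ x ∂μ,
      ‖|Hn (ψ k) x (u (ψ k) x) - H x (ulim x)| ^ q‖ ≤ bnd x := by
    intro k
    filter_upwards [hgrowth (ψ k), hHg, hDb] with x hg1 hg2 hD
    have hv0 : (0:ℝ) ≤ ‖u (ψ k) x‖ ^ γ := Real.rpow_nonneg (norm_nonneg _) _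
    have hl0 : (0:ℝ) ≤ ‖ulim x‖ ^ γ := Real.rpow_nonneg (norm_nonneg _) _
    have habs : |Hn (ψ k) x (u (ψ k) x) - H x (ulim x)|
        ≤ 2 * C + C * ‖u (ψ k) x‖ ^ γ + C * ‖ulim x‖ ^ γ := by
      calc |Hn (ψ k) x (u (ψ k) x) - H x (ulim x)|
          = |Hn (ψ k) x (u (ψ k) x) + -(H x (ulim x))| := by rw [sub_eq_add_neg]
        _ ≤ |Hn (ψ k) x (u (ψ k) x)| + |-(H x (ulim x))| := abs_add_le _ _
        _ = |Hn (ψ k) x (u (ψ k) x)| + |H x (ulim x)| := by rw [abs_neg]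
        _ ≤ C * (1 + ‖u (ψ k) x‖ ^ γ) + C * (1 + ‖ulim x‖ ^ γ) :=
            add_le_add (hg1 _) (hg2 _)
        _ = 2 * C + C * ‖u (ψ k) x‖ ^ γ + C * ‖ulim x‖ ^ γ := by ring
    have e1 : (C * ‖u (ψ k) x‖ ^ γ) ^ q = C ^ q * ‖u (ψ k) x‖ ^ p := by
      rw [Real.mul_rpow hC.le hv0, ← Real.rpow_mul (norm_nonneg _), hγq]
    have e2 : (C * ‖ulim x‖ ^ γ) ^ q = C ^ q * ‖ulim x‖ ^ p := by
      rw [Real.mul_rpow hC.le hl0, ← Real.rpow_mul (norm_nonneg _), hγq]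
    have e3 : ‖u (ψ k) x‖ ^ p ≤ 2 ^ p * (‖ulim x‖ ^ p + (W x).toReal) := by
      calc ‖u (ψ k) x‖ ^ p ≤ (‖ulim x‖ + ‖u (ψ k) x - ulim x‖) ^ p :=
            Real.rpow_le_rpow (norm_nonneg _)
              (norm_le_norm_add_norm_sub' (u (ψ k) x) (ulim x)) hp0.le
        _ ≤ 2 ^ p * (‖ulim x‖ ^ p + ‖u (ψ k) x - ulim x‖ ^ p) :=
            rpow_add2_le (norm_nonneg _) (norm_nonneg _) hp0.le
        _ ≤ 2 ^ p * (‖ulim x‖ ^ p + (W x).toReal) := by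
            have := hD k
            gcongr
    rw [Real.norm_eq_abs, abs_of_nonneg (Real.rpow_nonneg (abs_nonneg _) _)]
    calc |Hn (ψ k) x (u (ψ k) x) - H x (ulim x)| ^ q
        ≤ (2 * C + C * ‖u (ψ k) x‖ ^ γ + C * ‖ulim x‖ ^ γ) ^ q :=
          Real.rpow_le_rpow (abs_nonneg _) habs hq0.le
      _ ≤ 3 ^ q * ((2 * C) ^ q + (C * ‖u (ψ k) x‖ ^ γ) ^ q + (C * ‖ulim x‖ ^ γ) ^ q) :=
          rpow_add3_le (by positivity) (by positivity) (by positivity) hq0.le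
      _ ≤ bnd x := by
          rw [e1, e2]
          simp only [hbnd]
          have h5 := mul_le_mul_of_nonneg_left e3 (Real.rpow_nonneg hC.le q)
          have h6 : (0:ℝ) ≤ 3 ^ q := Real.rpow_nonneg (by norm_num) q
          nlinarith [h5, h6]
  -- a.e. convergence of the integrands to zero
  have h_lim : ∀ᵐ x ∂μ, Tendsto
      (fun k => |Hn (ψ k) x (u (ψ k) x) - H x (ulim x)| ^ q) atTop (𝓝 0) := by
    filter_upwards [hunif, hHcont, hvconv] with x hux hcx hvx
    set K := insert (ulim x) (Set.range fun k => u (ψ k) x) with hK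
    have hKc : IsCompact K := hvx.isCompact_insert_range
    have h1 : TendstoUniformlyOn (fun n ξ => Hn n x ξ) (H x) atTop K := hux K hKc
    have h2 : TendstoUniformlyOn (fun k ξ => Hn (ψ k) x ξ) (H x) atTop K := by
      intro s hs
      exact hψ.eventually (h1 s hs)
    have h3 : Tendsto (fun k => u (ψ k) x) atTop (𝓝[K] (ulim x)) := by
      rw [tendsto_nhdsWithin_iff]
      exact ⟨hvx, Eventually.of_forall fun k => Set.mem_insert_of_mem _ ⟨k, rfl⟩⟩
    have h4 : Tendsto (fun k => Hn (ψ k) x (u (ψ k) x)) atTop (𝓝 (H x (ulim x))) :=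
      h2.tendsto_comp hcx.continuousWithinAt h3
    have h5 : Tendsto (fun k => |Hn (ψ k) x (u (ψ k) x) - H x (ulim x)|) atTop (𝓝 0) := by
      have h6 := (h4.sub (tendsto_const_nhds (x := H x (ulim x)))).abs
      simpa using h6
    have h7 := h5.rpow_const (Or.inr hq0.le)
    rwa [Real.zero_rpow hq0.ne'] at h7
  have hmain := tendsto_integral_of_dominated_convergence bnd hFmeas hbndInt h_bound h_lim
  simpa [hψdef] using hmain

end
end

section
/- The self-similar function solves the radial advection-diffusion equation (Section 6.1). Let N ∈ ℕ, set d_m := 1/(2(N+1)) (equivalently N = 2/(4 d_m) − 1), and define ψ(z) = e^{−z} Σ_{k=0}^{N} z^k/k! and c(ρ,t) := ψ(ρ²/(4 d_m t)) for ρ > 0, t > 0. Then for all ρ > 0 and t > 0: ρ ∂_t c(ρ,t) − ∂_ρ( ρ d_m ∂_ρ c(ρ,t) − c(ρ,t) ) = 0 (this is the radial concentration equation ρ ∂_t c − ∂_ρ(ρ(d_m ∂_ρ c − u_ρ c)) = 0 with radial Darcy velocity u_ρ = 1/ρ). Moreover, for every fixed t > 0, c(ρ,t) → 1 as ρ → 0⁺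 and c(ρ,t) → 0 as ρ → +∞. -/
open Real Filter Topology

noncomputable section

/-- The analytical profile `ψ(z) = e^{−z} ∑_{k=0}^{N} z^k/k!`. -/
def ψ (N : ℕ) (z : ℝ) : ℝ :=
  Real.exp (-z) * ∑ k ∈ Finset.range (N + 1), z ^ k / (Nat.factorial k)

/-- The self-similar concentration `c(ρ,t) = ψ(ρ²/(4 d_m t))`. -/
def conc (N : ℕ) (dm : ℝ) (ρ t : ℝ) : ℝ :=
  ψ N (ρ ^ 2 / (4 * dm * t))

lemma hasDerivAt_psum (N : ℕ) (z : ℝ) :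
    HasDerivAt (fun z : ℝ => ∑ k ∈ Finset.range (N + 1), z ^ k / (Nat.factorial k : ℝ))
      (∑ k ∈ Finset.range N, z ^ k / (Nat.factorial k : ℝ)) z := by
  induction N with
  | zero => simpa using hasDerivAt_const z (1 : ℝ)
  | succ n ih =>
    have h2 : HasDerivAt (fun z : ℝ => z ^ (n + 1) / (Nat.factorial (n + 1) : ℝ))
        (((n : ℝ) + 1) * z ^ n / (Nat.factorial (n + 1) : ℝ)) z := by
      simpa using (hasDerivAt_pow (n + 1) z).div_const (Nat.factorial (n + 1) : ℝ)
    have h3 := ih.add h2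
    have hfun : (fun z : ℝ => (∑ k ∈ Finset.range (n + 1), z ^ k / (Nat.factorial k : ℝ))
        + z ^ (n + 1) / (Nat.factorial (n + 1) : ℝ))
        = fun z : ℝ => ∑ k ∈ Finset.range (n + 2), z ^ k / (Nat.factorial k : ℝ) := by
      funext z
      exact (Finset.sum_range_succ (fun k => z ^ k / (Nat.factorial k : ℝ)) (n + 1)).symm
    have hval : (∑ k ∈ Finset.range n, z ^ k / (Nat.factorial k : ℝ))
        + ((n : ℝ) + 1) * z ^ n / (Nat.factorial (n + 1) : ℝ)
        = ∑ k ∈ Finset.range (n + 1), z ^ k / (Nat.factorial k : ℝ) := by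
      rw [Finset.sum_range_succ]
      have hf : (Nat.factorial (n + 1) : ℝ) = ((n : ℝ) + 1) * (Nat.factorial n : ℝ) := by
        push_cast [Nat.factorial_succ]; ring
      rw [hf]
      have h1 : ((n : ℝ) + 1) ≠ 0 := by positivity
      have h2' : (Nat.factorial n : ℝ) ≠ 0 := by positivity
      field_simp
    rw [hval] at h3
    replace h3 : HasDerivAt (fun z : ℝ => ∑ k ∈ Finset.range (n + 2), z ^ k / (Nat.factorial k : ℝ))
        (∑ k ∈ Finset.range (n + 1), z ^ k / (Nat.factorial k : ℝ)) z := by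
      rw [← hfun]; exact h3
    exact h3

lemma hasDerivAt_ψ (N : ℕ) (z : ℝ) :
    HasDerivAt (ψ N) (-(Real.exp (-z) * z ^ N / (Nat.factorial N : ℝ))) z := by
  have he : HasDerivAt (fun z : ℝ => Real.exp (-z)) (-Real.exp (-z)) z := by
    simpa using (hasDerivAt_neg z).exp
  have h := he.mul (hasDerivAt_psum N z)
  have : (-Real.exp (-z)) * (∑ k ∈ Finset.range (N + 1), z ^ k / (Nat.factorial k : ℝ))
      + Real.exp (-z) * (∑ k ∈ Finset.range N, z ^ k / (Nat.factorial k : ℝ))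
      = -(Real.exp (-z) * z ^ N / (Nat.factorial N : ℝ)) := by
    rw [Finset.sum_range_succ]; ring
  rw [this] at h
  exact h

lemma hasDerivAt_haux (N : ℕ) (dm : ℝ) (hdm : dm = 1 / (2 * ((N : ℝ) + 1))) (z : ℝ) :
    HasDerivAt (fun z : ℝ =>
        -(2 * dm * (Real.exp (-z) * z ^ (N + 1)) / (Nat.factorial N : ℝ)) - ψ N z)
      (2 * dm * (Real.exp (-z) * z ^ (N + 1)) / (Nat.factorial N : ℝ)) z := by
  have he : HasDerivAt (fun z : ℝ => Real.exp (-z)) (-Real.exp (-z)) z := by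
    simpa using (hasDerivAt_neg z).exp
  have hp := he.mul (hasDerivAt_pow (N + 1) z)
  have h := (((hp.const_mul (2 * dm)).div_const (Nat.factorial N : ℝ)).neg).sub
    (hasDerivAt_ψ N z)
  refine h.congr_deriv ?_
  have hN1 : ((N : ℝ) + 1) ≠ 0 := by positivity
  have hF : (Nat.factorial N : ℝ) ≠ 0 := by positivity
  have hp1 : z ^ (N + 1) = z ^ N * z := pow_succ z N
  simp only [Nat.add_sub_cancel, Nat.cast_add, Nat.cast_one, hp1]
  subst hdm
  field_simp
  ring

/-- **The self-similar function solves the radial advection-diffusion equation**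
(Section 6.1). With `d_m = 1/(2(N+1))` and `c(ρ,t) = ψ(ρ²/(4 d_m t))`, one has
`ρ ∂_t c − ∂_ρ(ρ d_m ∂_ρ c − c) = 0` on `(0,∞)×(0,∞)` (this is the radial equation
`ρ ∂_t c − ∂_ρ(ρ(d_m ∂_ρ c − u_ρ c)) = 0` with Darcy velocity `u_ρ = 1/ρ`), and for every
`t > 0`, `c(ρ,t) → 1` as `ρ → 0⁺` and `c(ρ,t) → 0` as `ρ → +∞`. -/
theorem self_similar_solution (N : ℕ) (dm : ℝ) (hdm : dm = 1 / (2 * ((N : ℝ) + 1))) :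
    (∀ ρ : ℝ, 0 < ρ → ∀ t : ℝ, 0 < t →
      ρ * deriv (fun τ => conc N dm ρ τ) t
        - deriv (fun r => r * dm * deriv (fun r' => conc N dm r' t) r - conc N dm r t) ρ
        = 0) ∧
    (∀ t : ℝ, 0 < t → Tendsto (fun ρ => conc N dm ρ t) (𝓝[>] 0) (𝓝 1)) ∧
    (∀ t : ℝ, 0 < t → Tendsto (fun ρ => conc N dm ρ t) atTop (𝓝 0)) := by
  have hdm0 : 0 < dm := by rw [hdm]; positivity
  have hF : (Nat.factorial N : ℝ) ≠ 0 := by positivity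
  refine ⟨?_, ?_, ?_⟩
  · intro ρ hρ t ht
    have ha : (4 * dm * t) ≠ 0 := by positivity
    -- time derivative
    have hzt : HasDerivAt (fun τ : ℝ => ρ ^ 2 / (4 * dm * τ))
        ((0 * (4 * dm * t) - ρ ^ 2 * (4 * dm * 1)) / (4 * dm * t) ^ 2) t :=
      (hasDerivAt_const t (ρ ^ 2)).div ((hasDerivAt_id t).const_mul (4 * dm)) ha
    have hct : HasDerivAt (fun τ => conc N dm ρ τ)
        (-(Real.exp (-(ρ ^ 2 / (4 * dm * t))) * (ρ ^ 2 / (4 * dm * t)) ^ N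
          / (Nat.factorial N : ℝ))
          * ((0 * (4 * dm * t) - ρ ^ 2 * (4 * dm * 1)) / (4 * dm * t) ^ 2)) t :=
      (hasDerivAt_ψ N (ρ ^ 2 / (4 * dm * t))).comp t hzt
    -- spatial derivative of c
    have hderiv_r : ∀ r : ℝ, deriv (fun r' => conc N dm r' t) r
        = -(Real.exp (-(r ^ 2 / (4 * dm * t))) * (r ^ 2 / (4 * dm * t)) ^ N
            / (Nat.factorial N : ℝ)) * ((2 : ℕ) * r ^ (2 - 1) / (4 * dm * t)) := by
      intro r
      have hz : HasDerivAt (fun r' : ℝ => r' ^ 2 / (4 * dm * t))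
          ((2 : ℕ) * r ^ (2 - 1) / (4 * dm * t)) r :=
        (hasDerivAt_pow 2 r).div_const (4 * dm * t)
      exact ((hasDerivAt_ψ N (r ^ 2 / (4 * dm * t))).comp r hz).deriv
    have hEq : (fun r => r * dm * deriv (fun r' => conc N dm r' t) r - conc N dm r t)
        = fun r : ℝ =>
            -(2 * dm * (Real.exp (-(r ^ 2 / (4 * dm * t))) * (r ^ 2 / (4 * dm * t)) ^ (N + 1))
              / (Nat.factorial N : ℝ)) - ψ N (r ^ 2 / (4 * dm * t)) := by
      funext r
      rw [hderiv_r r]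
      have hp1 : (r ^ 2 / (4 * dm * t)) ^ (N + 1)
          = (r ^ 2 / (4 * dm * t)) ^ N * (r ^ 2 / (4 * dm * t)) := pow_succ _ _
      rw [hp1]
      show _ - ψ N (r ^ 2 / (4 * dm * t)) = _
      set z := r ^ 2 / (4 * dm * t) with hz
      have : r * dm * (-(Real.exp (-z) * z ^ N / (Nat.factorial N : ℝ))
          * ((2 : ℕ) * r ^ (2 - 1) / (4 * dm * t)))
          = -(2 * dm * (Real.exp (-z) * (z ^ N * z)) / (Nat.factorial N : ℝ)) := by
        rw [hz]
        field_simp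
        ring
      rw [this]
    rw [hEq]
    have hz2 : HasDerivAt (fun r : ℝ => r ^ 2 / (4 * dm * t))
        ((2 : ℕ) * ρ ^ (2 - 1) / (4 * dm * t)) ρ :=
      (hasDerivAt_pow 2 ρ).div_const (4 * dm * t)
    have hH : HasDerivAt (fun r : ℝ =>
        -(2 * dm * (Real.exp (-(r ^ 2 / (4 * dm * t))) * (r ^ 2 / (4 * dm * t)) ^ (N + 1))
          / (Nat.factorial N : ℝ)) - ψ N (r ^ 2 / (4 * dm * t)))
        ((2 * dm * (Real.exp (-(ρ ^ 2 / (4 * dm * t))) * (ρ ^ 2 / (4 * dm * t)) ^ (N + 1))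
          / (Nat.factorial N : ℝ)) * ((2 : ℕ) * ρ ^ (2 - 1) / (4 * dm * t))) ρ :=
      by have := (hasDerivAt_haux N dm hdm (ρ ^ 2 / (4 * dm * t))).comp ρ hz2; exact this
    rw [hct.deriv, hH.deriv]
    have ht0 : t ≠ 0 := ne_of_gt ht
    have hdm' : dm ≠ 0 := ne_of_gt hdm0
    have hp1 : (ρ ^ 2 / (4 * dm * t)) ^ (N + 1)
        = (ρ ^ 2 / (4 * dm * t)) ^ N * (ρ ^ 2 / (4 * dm * t)) := pow_succ _ _
    rw [hp1]
    field_simp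
    ring
  · intro t ht
    have ha : (0 : ℝ) < 4 * dm * t := by positivity
    have hcont : Continuous (ψ N) := by
      unfold ψ; fun_prop
    have h1 : Tendsto (fun ρ : ℝ => ρ ^ 2 / (4 * dm * t)) (𝓝[>] 0) (𝓝 0) := by
      have h2 : Tendsto (fun ρ : ℝ => ρ ^ 2 / (4 * dm * t)) (𝓝 0)
          (𝓝 ((0 : ℝ) ^ 2 / (4 * dm * t))) :=
        ((continuous_pow 2).div_const _).tendsto 0
      simpa using h2.mono_left nhdsWithin_le_nhds
    have hψ0 : ψ N 0 = 1 := by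
      unfold ψ
      rw [Finset.sum_eq_single_of_mem 0 (Finset.mem_range.2 (Nat.succ_pos N))]
      · simp
      · intro k _ hk
        simp [zero_pow hk]
    have h2 := (hcont.tendsto 0).comp h1
    rw [hψ0] at h2
    exact h2
  · intro t ht
    have ha : (0 : ℝ) < 4 * dm * t := by positivity
    have hterm : ∀ k : ℕ, Tendsto (fun z : ℝ => z ^ k * Real.exp (-z) / (Nat.factorial k : ℝ))
        atTop (𝓝 0) := by
      intro k
      simpa using (tendsto_pow_mul_exp_neg_atTop_nhds_zero k).div_const (Nat.factorial k : ℝ)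
    have hsum : Tendsto (fun z : ℝ => ∑ k ∈ Finset.range (N + 1),
        z ^ k * Real.exp (-z) / (Nat.factorial k : ℝ)) atTop (𝓝 0) := by
      have h := tendsto_finset_sum (Finset.range (N + 1)) (fun k _ => hterm k)
      simpa using h
    have hψtop : Tendsto (ψ N) atTop (𝓝 0) := by
      refine hsum.congr fun z => ?_
      simp only [ψ, Finset.mul_sum]
      exact Finset.sum_congr rfl fun k _ => by ring
    have h1 : Tendsto (fun ρ : ℝ => ρ ^ 2 / (4 * dm * t)) atTop atTop :=
      (tendsto_pow_atTop two_ne_zero).atTop_div_const ha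
    exact hψtop.comp h1
end
end
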